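/- Let n ≥ 1 and B ≥ 2 be real, and set λ_min = (B − √(B² − 4))/2 and λ_max = (B + √(B² − 4))/2. Suppose (d_j)_{j∈ℤ} is a bi-infinite sequence of real symmetric positive definite n×n matrices and (β_j)_{j∈ℤ} a sequence of real symmetric n×n matrices with d_{j+1} = β_{j+1} − d_j⁻¹ and λ₊(β_j) ≤ B for all j ∈ ℤ. Then λ_min ≤ λ₋(d_j) ≤ λ_max for every j ∈ ℤ. -/

import Mathlib

open Matrix Filter

/-- The least eigenvalue of a real symmetric (Hermitian) matrix. -/
noncomputable def minEig {n : ℕ} {M : Matrix (Fin n) (Fin n) ℝ}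
    (hM : M.IsHermitian) : ℝ :=
  ⨅ i, hM.eigenvalues i

/-- The greatest eigenvalue of a real symmetric (Hermitian) matrix. -/
noncomputable def maxEig {n : ℕ} {M : Matrix (Fin n) (Fin n) ℝ}
    (hM : M.IsHermitian) : ℝ :=
  ⨆ i, hM.eigenvalues i

lemma rayleigh_bounds {n : ℕ} {M : Matrix (Fin n) (Fin n) ℝ} (hM : M.IsHermitian)
    (x : EuclideanSpace ℝ (Fin n)) (hx : ‖x‖ = 1) :
    minEig hM ≤ ⇑x ⬝ᵥ (M *ᵥ ⇑x) ∧ ⇑x ⬝ᵥ (M *ᵥ ⇑x) ≤ maxEig hM := by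
  have hne : Nonempty (Fin n) := by
    by_contra h
    haveI := not_nonempty_iff.mp h
    have : x = 0 := by ext i; exact isEmptyElim i
    rw [this] at hx; simp at hx
  set b := hM.eigenvectorBasis with hb
  set c : Fin n → ℝ := fun i => inner ℝ x (b i) with hc
  have hsum : ∑ i, c i * c i = 1 := by
    have h := b.sum_inner_mul_inner x x
    have h2 : (inner ℝ x x : ℝ) = 1 := by
      rw [real_inner_self_eq_norm_sq, hx]; norm_num
    rw [h2] at h
    rw [← h]
    congr 1; ext i
    rw [hc, real_inner_comm x (b i)]
  have hsym := (Matrix.isHermitian_iff_isSymmetric.mp hM)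
  have key : ⇑x ⬝ᵥ (M *ᵥ ⇑x) = ∑ i, hM.eigenvalues i * (c i * c i) := by
    have h0 : (⇑x ⬝ᵥ (M *ᵥ ⇑x)) = (inner ℝ x (Matrix.toEuclideanLin M x) : ℝ) := by
      rw [EuclideanSpace.inner_eq_star_dotProduct]; simp [dotProduct_comm]
    rw [h0, ← b.sum_inner_mul_inner x (Matrix.toEuclideanLin M x)]
    apply Finset.sum_congr rfl
    intro i _
    have h2 : Matrix.toEuclideanLin M (b i) = hM.eigenvalues i • (b i) := by
      apply (WithLp.equiv 2 (Fin n → ℝ)).injective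
      simpa using hM.mulVec_eigenvectorBasis i
    have h1 : (inner ℝ (b i) (Matrix.toEuclideanLin M x) : ℝ) = hM.eigenvalues i * c i := by
      rw [← hsym (b i) x, h2, real_inner_smul_left, hc, real_inner_comm]
    rw [h1, hc]; ring
  have hbdd : BddBelow (Set.range hM.eigenvalues) := (Set.finite_range _).bddBelow
  have hbdd2 : BddAbove (Set.range hM.eigenvalues) := (Set.finite_range _).bddAbove
  constructor
  · rw [key]
    calc minEig hM = ∑ i, minEig hM * (c i * c i) := by
          rw [← Finset.mul_sum, hsum, mul_one]
      _ ≤ ∑ i, hM.eigenvalues i * (c i * c i) := by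
          apply Finset.sum_le_sum
          intro i _
          exact mul_le_mul_of_nonneg_right (ciInf_le hbdd i) (mul_self_nonneg _)
  · rw [key]
    calc ∑ i, hM.eigenvalues i * (c i * c i) ≤ ∑ i, maxEig hM * (c i * c i) := by
          apply Finset.sum_le_sum
          intro i _
          exact mul_le_mul_of_nonneg_right (le_ciSup hbdd2 i) (mul_self_nonneg _)
      _ = maxEig hM := by rw [← Finset.mul_sum, hsum, mul_one]

noncomputable def seqA (B : ℝ) : ℕ → ℝ
  | 0 => B
  | k + 1 => B - (seqA B k)⁻¹

lemma inv_le_swap {a b : ℝ} (ha : 0 < a) (h : a⁻¹ ≤ b) : b⁻¹ ≤ a := by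
  have := inv_anti₀ (inv_pos.mpr ha) h
  rwa [inv_inv] at this

/-- Along a bi-infinite sequence of real symmetric positive definite `n×n`
matrices with `d_{j+1} = β_{j+1} − d_j⁻¹` and `λ₊(β_j) ≤ B` (where `B ≥ 2`), every least
eigenvalue `λ₋(d_j)` lies in `[λ_min, λ_max]` with `λ_{min,max} = (B ∓ √(B² − 4))/2`. -/
theorem stmt14 {n : ℕ} (hn : 1 ≤ n) (B : ℝ) (hB : 2 ≤ B)
    (d β : ℤ → Matrix (Fin n) (Fin n) ℝ)
    (hd : ∀ j, (d j).PosDef)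
    (hβ : ∀ j, (β j).IsHermitian)
    (hrec : ∀ j : ℤ, d (j + 1) = β (j + 1) - (d j)⁻¹)
    (hmax : ∀ j, maxEig (hβ j) ≤ B) :
    ∀ j : ℤ, (B - Real.sqrt (B ^ 2 - 4)) / 2 ≤ minEig (hd j).1 ∧
      minEig (hd j).1 ≤ (B + Real.sqrt (B ^ 2 - 4)) / 2 := by
  haveI hne : Nonempty (Fin n) := ⟨⟨0, hn⟩⟩
  set s := Real.sqrt (B ^ 2 - 4) with hs
  have hs0 : 0 ≤ s := Real.sqrt_nonneg _
  have hs2 : s ^ 2 = B ^ 2 - 4 := Real.sq_sqrt (by nlinarith)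
  set lmax := (B + s) / 2 with hlmaxdef
  set lmin := (B - s) / 2 with hlmindef
  have hsB : s ≤ B := by nlinarith
  have hlmax1 : 1 ≤ lmax := by rw [hlmaxdef]; linarith
  have hfix : lmax * lmax - B * lmax + 1 = 0 := by
    have h : (B + s) / 2 * ((B + s) / 2) - B * ((B + s) / 2) + 1
        = (s ^ 2 - (B ^ 2 - 4)) / 4 := by ring
    rw [hs2] at h; rw [hlmaxdef, h]; ring
  set m : ℤ → ℝ := fun j => minEig (hd j).1 with hm
  have hmpos : ∀ j, 0 < m j := by
    intro j
    obtain ⟨i₀, hi₀⟩ := Finite.exists_min (hd j).1.eigenvalues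
    exact lt_of_lt_of_le ((hd j).eigenvalues_pos i₀) (le_ciInf hi₀)
  -- the key step inequality
  have hstep : ∀ j : ℤ, m (j + 1) ≤ B - (m j)⁻¹ := by
    intro j
    obtain ⟨i₀, hi₀⟩ := Finite.exists_min (hd j).1.eigenvalues
    have hmj : m j = (hd j).1.eigenvalues i₀ :=
      le_antisymm (ciInf_le ((Set.finite_range _).bddBelow) i₀) (le_ciInf hi₀)
    set v : EuclideanSpace ℝ (Fin n) := (hd j).1.eigenvectorBasis i₀ with hv
    have hvnorm : ‖v‖ = 1 := (hd j).1.eigenvectorBasis.orthonormal.1 i₀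
    have hAv : d j *ᵥ ⇑v = m j • ⇑v := by
      rw [hmj]; exact (hd j).1.mulVec_eigenvectorBasis i₀
    have hdet : IsUnit (d j).det := (hd j).det_pos.ne'.isUnit
    have hm0 : m j ≠ 0 := (hmpos j).ne'
    have hinv : (d j)⁻¹ *ᵥ ⇑v = (m j)⁻¹ • ⇑v := by
      have h1 : (d j)⁻¹ *ᵥ (d j *ᵥ ⇑v) = ⇑v := by
        rw [mulVec_mulVec, Matrix.nonsing_inv_mul _ hdet, one_mulVec]
      rw [hAv, mulVec_smul] at h1
      calc (d j)⁻¹ *ᵥ ⇑v = (m j)⁻¹ • (m j • ((d j)⁻¹ *ᵥ ⇑v)) := by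
            rw [smul_smul, inv_mul_cancel₀ hm0, one_smul]
        _ = (m j)⁻¹ • ⇑v := by rw [h1]
    have hvv : ⇑v ⬝ᵥ ⇑v = 1 := by
      have h0 : (inner ℝ v v : ℝ) = ⇑v ⬝ᵥ ⇑v := rfl
      rw [← h0, real_inner_self_eq_norm_sq, hvnorm]; norm_num
    have hray1 := (rayleigh_bounds (hd (j + 1)).1 v hvnorm).1
    have hray2 := (rayleigh_bounds (hβ (j + 1)) v hvnorm).2
    have hq : ⇑v ⬝ᵥ (d (j + 1) *ᵥ ⇑v) = ⇑v ⬝ᵥ (β (j + 1) *ᵥ ⇑v) - (m j)⁻¹ := by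
      rw [hrec j, Matrix.sub_mulVec, dotProduct_sub, hinv, dotProduct_smul, hvv,
        smul_eq_mul, mul_one]
    have hβB := hmax (j + 1)
    calc m (j + 1) ≤ ⇑v ⬝ᵥ (d (j + 1) *ᵥ ⇑v) := hray1
      _ = ⇑v ⬝ᵥ (β (j + 1) *ᵥ ⇑v) - (m j)⁻¹ := hq
      _ ≤ B - (m j)⁻¹ := by linarith
  have hstep' : ∀ j : ℤ, m j ≤ B - (m (j - 1))⁻¹ := by
    intro j
    have h := hstep (j - 1)
    rwa [sub_add_cancel] at h
  -- the comparison sequence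
  have halmax : ∀ k, lmax ≤ seqA B k := by
    intro k
    induction k with
    | zero => show lmax ≤ B; rw [hlmaxdef]; linarith
    | succ k ih =>
      show lmax ≤ B - (seqA B k)⁻¹
      have hlm0 : 0 < lmax := by linarith
      have h1 : (seqA B k)⁻¹ ≤ lmax⁻¹ := inv_anti₀ hlm0 ih
      have h2 : B - lmax⁻¹ = lmax := by
        have h3 : lmax⁻¹ = B - lmax := by
          field_simp
          nlinarith [hfix]
        rw [h3]; ring
      linarith
  have hapos : ∀ k, 0 < seqA B k := fun k => lt_of_lt_of_le (by linarith) (halmax k)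
  have hanti : ∀ k, seqA B (k + 1) ≤ seqA B k := by
    intro k
    show B - (seqA B k)⁻¹ ≤ seqA B k
    have hak := hapos k
    have h := halmax k
    have hcancel : seqA B k * (seqA B k)⁻¹ = 1 := mul_inv_cancel₀ hak.ne'
    nlinarith [mul_nonneg (sub_nonneg.mpr h) (show (0:ℝ) ≤ seqA B k + lmax - B by
      rw [hlmaxdef] at h ⊢; linarith)]
  have hAnti : Antitone (seqA B) := antitone_nat_of_succ_le hanti
  have hbddB : BddBelow (Set.range (seqA B)) := ⟨lmax, by rintro y ⟨k, rfl⟩; exact halmax k⟩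
  set L := ⨅ k, seqA B k with hL
  have hconv : Tendsto (seqA B) atTop (nhds L) := tendsto_atTop_ciInf hAnti hbddB
  have hLlmax : lmax ≤ L := le_ciInf halmax
  have hLpos : 0 < L := by linarith
  have hconv2 : Tendsto (fun k => seqA B (k + 1)) atTop (nhds L) :=
    hconv.comp (tendsto_add_atTop_nat 1)
  have hconv3 : Tendsto (fun k => B - (seqA B k)⁻¹) atTop (nhds (B - L⁻¹)) :=
    tendsto_const_nhds.sub (hconv.inv₀ hLpos.ne')
  have hLfix : L = B - L⁻¹ := tendsto_nhds_unique hconv2 hconv3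
  have hLeq : L = lmax := by
    have hc : L⁻¹ * L = 1 := inv_mul_cancel₀ hLpos.ne'
    have h1 : L * L - B * L + 1 = 0 := by nlinarith [hLfix, hc]
    have h2 : L ≤ lmax := by nlinarith [sq_nonneg (L - lmax), mul_nonneg hs0 (sub_nonneg.mpr hLlmax), hfix,
        show 2 * lmax = B + s by rw [hlmaxdef]; ring]
    linarith
  -- upper bounds by induction
  have hub : ∀ k, ∀ j : ℤ, m j ≤ seqA B k := by
    intro k
    induction k with
    | zero =>
      intro j
      have h := hstep' j
      have h2 : 0 < (m (j - 1))⁻¹ := inv_pos.mpr (hmpos (j - 1))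
      show m j ≤ B; linarith
    | succ k ih =>
      intro j
      have h := hstep' j
      have h2 : (seqA B k)⁻¹ ≤ (m (j - 1))⁻¹ := inv_anti₀ (hmpos (j - 1)) (ih (j - 1))
      show m j ≤ B - (seqA B k)⁻¹; linarith
  -- lower bounds by induction
  have hlb : ∀ k, ∀ j : ℤ, (seqA B k)⁻¹ ≤ m j := by
    intro k
    induction k with
    | zero =>
      intro j
      have h := hstep j
      have h2 : (m j)⁻¹ ≤ B := by linarith [hmpos (j + 1)]
      exact inv_le_swap (hmpos j) h2
    | succ k ih =>
      intro j
      have h := hstep j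
      have h2 : (m j)⁻¹ ≤ B - (seqA B k)⁻¹ := by linarith [ih (j + 1)]
      exact inv_le_swap (hmpos j) h2
  intro j
  constructor
  · have hinvconv : Tendsto (fun k => (seqA B k)⁻¹) atTop (nhds L⁻¹) := hconv.inv₀ hLpos.ne'
    have h1 : L⁻¹ ≤ m j := le_of_tendsto hinvconv (Eventually.of_forall fun k => hlb k j)
    have h2 : lmin = L⁻¹ := by
      rw [hLeq]
      have hmul : lmin * lmax = 1 := by
        have : (B - s) / 2 * ((B + s) / 2) = (B ^ 2 - s ^ 2) / 4 := by ring
        rw [hs2] at this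
        rw [hlmindef, hlmaxdef, this]; ring
      exact eq_inv_of_mul_eq_one_left hmul
    show lmin ≤ m j
    rw [h2]; exact h1
  · have h1 : m j ≤ L := le_ciInf fun k => hub k j
    rw [hLeq] at h1
    exact h1
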